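/- Let q be a real number with q > 0 and q ≠ 1 and let A_1, A_2, A_3 be complex numbers. If the polynomial W(x,y) = x^6 + A_1 x^4 y^2 + A_2 x^2 y^4 + A_3 y^6 satisfies W((x+(q-1)y)/√q, (x-y)/√q) = -W(x,y) identically, then q = 2 or q = 4/3. -/

import Mathlib

/-- Case n=3 of the even-degree search: if `W(x,y) = x⁶ + A₁x⁴y² + A₂x²y⁴ + A₃y⁶`
satisfies `W^{σ_q} = -W` for some `q > 0`, `q ≠ 1`, then `q = 2` or `q = 4/3`. -/
theorem fwe_degree_six_q_values (q : ℝ) (hq0 : 0 < q) (hq1 : q ≠ 1) (A1 A2 A3 : ℂ)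
    (hW : ∀ x y : ℂ,
        ((x + ((q : ℂ) - 1) * y) / (Real.sqrt q : ℂ)) ^ 6 +
            A1 * ((x + ((q : ℂ) - 1) * y) / (Real.sqrt q : ℂ)) ^ 4 *
              ((x - y) / (Real.sqrt q : ℂ)) ^ 2 +
            A2 * ((x + ((q : ℂ) - 1) * y) / (Real.sqrt q : ℂ)) ^ 2 *
              ((x - y) / (Real.sqrt q : ℂ)) ^ 4 +
            A3 * ((x - y) / (Real.sqrt q : ℂ)) ^ 6
          = -(x ^ 6 + A1 * x ^ 4 * y ^ 2 + A2 * x ^ 2 * y ^ 4 + A3 * y ^ 6)) :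
    q = 2 ∨ q = 4 / 3 := by

  have hs2 : ((Real.sqrt q : ℝ) : ℂ) ^ 2 = (q : ℂ) := by
    norm_cast
    exact Real.sq_sqrt hq0.le
  have hs0 : ((Real.sqrt q : ℝ) : ℂ) ≠ 0 := by
    simp only [ne_eq, Complex.ofReal_eq_zero]
    exact (Real.sqrt_ne_zero'.mpr hq0)
  have hqc0 : (q : ℂ) ≠ 0 := by
    exact_mod_cast hq0.ne'
  have e6 : ((Real.sqrt q : ℝ) : ℂ) ^ 6 = (q : ℂ) ^ 3 := by
    rw [show (6 : ℕ) = 2 * 3 from rfl, pow_mul, hs2]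
  have e4 : ((Real.sqrt q : ℝ) : ℂ) ^ 4 = (q : ℂ) ^ 2 := by
    rw [show (4 : ℕ) = 2 * 2 from rfl, pow_mul, hs2]
  have key : ∀ x y : ℂ,
      (x + ((q : ℂ) - 1) * y) ^ 6 + A1 * (x + ((q : ℂ) - 1) * y) ^ 4 * (x - y) ^ 2 +
          A2 * (x + ((q : ℂ) - 1) * y) ^ 2 * (x - y) ^ 4 + A3 * (x - y) ^ 6
        = -((q : ℂ) ^ 3 * (x ^ 6 + A1 * x ^ 4 * y ^ 2 + A2 * x ^ 2 * y ^ 4 + A3 * y ^ 6)) := by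
    intro x y
    have h := hW x y
    simp only [div_pow] at h
    rw [e6, e4, hs2] at h
    have m2 : ∀ u v : ℂ, A1 * (u / (q : ℂ) ^ 2) * (v / (q : ℂ)) = A1 * u * v / (q : ℂ) ^ 3 := by
      intro u v
      field_simp
    have m3 : ∀ u v : ℂ, A2 * (u / (q : ℂ)) * (v / (q : ℂ) ^ 2) = A2 * u * v / (q : ℂ) ^ 3 := by
      intro u v
      field_simp
    rw [m2, m3, ← mul_div_assoc, ← add_div, ← add_div, ← add_div,
      div_eq_iff (pow_ne_zero 3 hqc0)] at h
    linear_combination h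
  have E0 := key 1 0
  have E1 := key 1 1
  have E2 := key 1 2
  have E3 := key 1 3
  have E4 := key 1 4
  have E5 := key 1 5
  have E6 := key 1 6
  have main : (q : ℂ) ^ 6 * (3 * (q : ℂ) ^ 2 - 10 * (q : ℂ) + 8) = 0 := by
    linear_combination
      ((71/40) * (q:ℂ)^5 + (-26311/5760) * (q:ℂ)^4 + (2521/1440) * (q:ℂ)^3) * E0 +
      (3 * (q:ℂ)^5 + (-4211/240) * (q:ℂ)^4 + (901/60) * (q:ℂ)^3) * E1 +
      ((-15/4) * (q:ℂ)^5 + (7531/384) * (q:ℂ)^4 + (-1253/96) * (q:ℂ)^3) * E2 +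
      ((10/3) * (q:ℂ)^5 + (-1199/72) * (q:ℂ)^4 + (185/18) * (q:ℂ)^3) * E3 +
      ((-15/8) * (q:ℂ)^5 + (3509/384) * (q:ℂ)^4 + (-523/96) * (q:ℂ)^3) * E4 +
      ((3/5) * (q:ℂ)^5 + (-691/240) * (q:ℂ)^4 + (101/60) * (q:ℂ)^3) * E5 +
      ((-1/12) * (q:ℂ)^5 + (2279/5760) * (q:ℂ)^4 + (-329/1440) * (q:ℂ)^3) * E6
  have h2 : ((q : ℂ) - 2) * (3 * (q : ℂ) - 4) = 0 := by
    rcases mul_eq_zero.mp main with h | h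
    · exact absurd h (pow_ne_zero _ hqc0)
    · linear_combination h
  rcases mul_eq_zero.mp h2 with h | h
  · left
    have : (q : ℂ) = 2 := by linear_combination h
    exact_mod_cast this
  · right
    have h3 : 3 * q - 4 = 0 := by
      have : ((3 * q - 4 : ℝ) : ℂ) = 0 := by push_cast; linear_combination h
      exact_mod_cast this
    linarith
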